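/- Let B be a commutative noetherian ring that is complete and separated for the K-adic topology of an ideal K ⊆ B, let A be a commutative noetherian ring complete and separated for the J-adic topology of an ideal J ⊆ A, and let φ: B → A be a ring homomorphism with φ(K) ⊆ J such that for every n ≥ 0 the induced map B/K^{n+1} → A/J^{n+1} is surjective and such that A is flat as a B-module. Set I = ker(B → A/J). Then the canonical homomorphism from the I-adic completion of B to A is an isomorphism. -/

import Mathlib

open TensorProduct

set_option synthInstance.maxHeartbeats 1000000
set_option maxHeartbeats 1000000

private lemma aux_mem_of_forall_sup {A : Type*} [CommRing A] [IsNoetherianRing A] (J : Ideal A)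
    [IsAdicComplete J A] (N : Ideal A) {a : A} (ha : ∀ n : ℕ, a ∈ N ⊔ J ^ n) : a ∈ N := by
  haveI : Module.Finite A (A ⧸ N) :=
    Module.Finite.of_surjective N.mkQ (Submodule.mkQ_surjective N)
  have hx : (Submodule.Quotient.mk a : A ⧸ N) ∈ (⨅ i : ℕ, J ^ i • ⊤ : Submodule A (A ⧸ N)) := by
    rw [Submodule.mem_iInf]
    intro i
    obtain ⟨x, hxN, y, hyJ, rfl⟩ := Submodule.mem_sup.mp (ha i)
    have h1 : (Submodule.Quotient.mk (x + y) : A ⧸ N) = y • Submodule.Quotient.mk 1 := by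
      rw [← Submodule.Quotient.mk_smul, smul_eq_mul, mul_one, Submodule.Quotient.eq]
      simpa using hxN
    rw [h1]
    exact Submodule.smul_mem_smul hyJ Submodule.mem_top
  obtain ⟨r, hr⟩ := (Ideal.mem_iInf_smul_pow_eq_bot_iff J _).mp hx
  have hUnit : IsUnit (1 - (r : A)) := by
    have hj := IsAdicComplete.le_jacobson_bot (I := J) r.2
    rw [Ideal.mem_jacobson_bot] at hj
    have h2 := hj (-1)
    have h3 : (r : A) * -1 + 1 = 1 - (r : A) := by ring
    rwa [h3] at h2
  have h0 : (1 - (r : A)) • (Submodule.Quotient.mk a : A ⧸ N) = 0 := by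
    rw [sub_smul, one_smul, hr, sub_self]
  rw [hUnit.smul_eq_zero] at h0
  exact (Submodule.Quotient.mk_eq_zero N).mp h0

private lemma aux_flat_step {B A : Type*} [CommRing B] [CommRing A] [Algebra B A]
    [Module.Flat B A] (J : Ideal A)
    (hsurj0 : ∀ a : A, ∃ b : B, algebraMap B A b - a ∈ J)
    (P : Ideal B) (q : B) (hq : algebraMap B A q ∈ Ideal.map (algebraMap B A) P) :
    q ∈ P ⊔ (J.comap (algebraMap B A)) * (P ⊔ Ideal.span {q}) := by
  set φ := algebraMap B A with hφ
  set IJ : Ideal B := J.comap φ with hIJ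
  -- finite representation of φ q
  rw [Ideal.map, ← Ideal.submodule_span_eq, Submodule.mem_span_set'] at hq
  obtain ⟨n, c, g, hg⟩ := hq
  have hgmem : ∀ i, ∃ p : B, p ∈ P ∧ φ p = (g i : A) := fun i => by
    obtain ⟨p, hp, hp2⟩ := (g i).2
    exact ⟨p, hp, hp2⟩
  choose p hpP hpg using hgmem
  set W : Ideal B := P ⊔ Ideal.span {q} with hW
  have hqW : q ∈ W := Submodule.mem_sup_right (Ideal.subset_span rfl)
  have hpW : ∀ i, p i ∈ W := fun i => Submodule.mem_sup_left (hpP i)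
  -- the element of W ⊗ A and its vanishing
  set t : W ⊗[B] A :=
    (⟨q, hqW⟩ : W) ⊗ₜ[B] (1 : A) - ∑ i, (⟨p i, hpW i⟩ : W) ⊗ₜ[B] (c i) with ht
  have ht0 : t = 0 := by
    have hinj := (Module.Flat.iff_rTensor_injective' (R := B) (M := A)).mp inferInstance W
    apply hinj
    rw [map_zero]
    apply (TensorProduct.lid B A).injective
    rw [map_zero]
    simp only [ht, map_sub, map_sum, LinearMap.rTensor_tmul, Submodule.coe_subtype,
      TensorProduct.lid_tmul]
    rw [Algebra.smul_def, mul_one]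
    have hsm : ∀ i, (p i : B) • (c i) = c i • ((g i : A)) := fun i => by
      rw [Algebra.smul_def, hpg i, smul_eq_mul, mul_comm]
    simp only [hsm]
    rw [hg, sub_self]
  -- the B-linear map h : A → B ⧸ IJ
  set J' : Submodule B A := J.restrictScalars B with hJ'
  have hker : ∀ b : B, b ∈ LinearMap.ker (J'.mkQ ∘ₗ (Algebra.linearMap B A)) ↔ b ∈ IJ := by
    intro b
    simp only [LinearMap.mem_ker, LinearMap.comp_apply, Algebra.linearMap_apply,
      Submodule.mkQ_apply, Submodule.Quotient.mk_eq_zero]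
    exact Iff.rfl
  set e : (B ⧸ IJ) →ₗ[B] (A ⧸ J') :=
    Submodule.liftQ IJ (J'.mkQ ∘ₗ (Algebra.linearMap B A))
      (fun b hb => (hker b).mpr hb) with he
  have hebij : Function.Bijective e := by
    constructor
    · rw [← LinearMap.ker_eq_bot]
      exact Submodule.ker_liftQ_eq_bot _ _ _ (fun b hb => (hker b).mp hb)
    · intro y
      obtain ⟨a, rfl⟩ := Submodule.Quotient.mk_surjective J' y
      obtain ⟨b, hb⟩ := hsurj0 a
      refine ⟨Submodule.Quotient.mk b, ?_⟩
      show (J'.mkQ ∘ₗ (Algebra.linearMap B A)) b = Submodule.Quotient.mk a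
      simp only [LinearMap.comp_apply, Algebra.linearMap_apply, Submodule.mkQ_apply]
      rw [Submodule.Quotient.eq]
      exact hb
  set E : (B ⧸ IJ) ≃ₗ[B] (A ⧸ J') := LinearEquiv.ofBijective e hebij with hE
  set h : A →ₗ[B] (B ⧸ IJ) := (E.symm : (A ⧸ J') →ₗ[B] (B ⧸ IJ)) ∘ₗ J'.mkQ with hh
  have hval : ∀ (x : A) (b : B), algebraMap B A b - x ∈ J →
      h x = Ideal.Quotient.mk IJ b := by
    intro x b hbx
    rw [hh]
    simp only [LinearMap.comp_apply, Submodule.mkQ_apply]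
    rw [LinearEquiv.coe_coe, LinearEquiv.symm_apply_eq, hE, LinearEquiv.ofBijective_apply]
    show Submodule.Quotient.mk x = e (Submodule.Quotient.mk b)
    rw [he, Submodule.liftQ_apply]
    simp only [LinearMap.comp_apply, Algebra.linearMap_apply, Submodule.mkQ_apply]
    rw [Submodule.Quotient.eq]
    rw [← neg_sub]
    exact Submodule.neg_mem _ (by simpa [hJ'] using hbx)
  have h1 : h (1 : A) = Ideal.Quotient.mk IJ 1 := hval 1 1 (by simp)
  have hd : ∀ i, ∃ d : B, Ideal.Quotient.mk IJ d = h (c i) := fun i =>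
    Ideal.Quotient.mk_surjective (h (c i))
  choose d hdk using hd
  -- apply (lTensor h) and the quotient equivalence to t = 0
  have key : ((⟨q, hqW⟩ : W) - ∑ i, d i • (⟨p i, hpW i⟩ : W)) ∈ (IJ • ⊤ : Submodule B W) := by
    have h2 : (tensorQuotEquivQuotSMul (↥W) IJ) ((LinearMap.lTensor (↥W) h) t) = 0 := by
      rw [ht0, map_zero]
      exact (tensorQuotEquivQuotSMul (↥W) IJ).map_zero
    rw [ht] at h2
    simp only [map_sub, map_sum, LinearMap.lTensor_tmul, h1, ← hdk,
      tensorQuotEquivQuotSMul_tmul_mk, one_smul] at h2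
    rw [← Submodule.Quotient.mk_eq_zero]
    show Submodule.mkQ _ _ = 0
    rw [map_sub, map_sum]
    simpa only [Submodule.mkQ_apply] using h2
  have key2 : q - ∑ i, d i * p i ∈ Submodule.map W.subtype (IJ • ⊤ : Submodule B W) := by
    refine ⟨_, key, ?_⟩
    simp
  rw [Submodule.map_smul'', Submodule.map_subtype_top, Ideal.smul_eq_mul] at key2
  have hsum : ∑ i, d i * p i ∈ P := Ideal.sum_mem _ (fun i _ => Ideal.mul_mem_left _ _ (hpP i))
  have hq3 : q = (∑ i, d i * p i) + (q - ∑ i, d i * p i) := by ring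
  rw [hq3]
  exact Ideal.add_mem _ (Ideal.mem_sup_left hsum) (Ideal.mem_sup_right key2)

private lemma aux_ind {B : Type*} [CommRing B] (Q P I : Ideal B) (h : Q ≤ P ⊔ I * Q) :
    ∀ k : ℕ, Q ≤ P ⊔ I ^ (k + 1) * Q := by
  intro k
  induction k with
  | zero => simpa using h
  | succ k ih =>
    refine ih.trans (sup_le le_sup_left ?_)
    have h2 : I ^ (k + 1) * Q ≤ I ^ (k + 1) * (P ⊔ I * Q) := Ideal.mul_mono_right h
    refine h2.trans ?_
    rw [Ideal.mul_sup]
    refine sup_le (Ideal.mul_le_right.trans le_sup_left) ?_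
    have h3 : I ^ (k + 1) * (I * Q) = I ^ (k + 1 + 1) * Q := by ring
    rw [h3]
    exact le_sup_right

/-- Let `B` be a noetherian ring, complete and separated for the `K`-adic topology, `A` a
noetherian ring complete and separated for the `J`-adic topology, and `φ : B → A` a ring
homomorphism with `φ(K) ⊆ J` such that every induced map `B/K^(n+1) → A/J^(n+1)` is
surjective (equivalently, every `a : A` is congruent to some `φ b` modulo `J^(n+1)`) and
such that `A` is flat as a `B`-module.  Set `I = ker(B → A/J)`.  Then the canonical
homomorphism from the `I`-adic completion of `B` to `A` is an isomorphism, i.e. there is a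
ring isomorphism from the `I`-adic completion of `B` onto `A` compatible with `φ`. -/
theorem adicCompletion_iso_of_flat_pseudoClosed (B A : Type*) [CommRing B] [CommRing A]
    [IsNoetherianRing B] [IsNoetherianRing A] (K : Ideal B) (J : Ideal A)
    [IsAdicComplete K B] [IsAdicComplete J A] (φ : B →+* A) (hKJ : K ≤ J.comap φ)
    (hsurj : ∀ n : ℕ, ∀ a : A, ∃ b : B, φ b - a ∈ J ^ (n + 1))
    (hflat : letI := φ.toAlgebra; Module.Flat B A) :
    ∃ ψ : AdicCompletion (RingHom.ker ((Ideal.Quotient.mk J).comp φ)) B ≃+* A,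
      ∀ b : B,
        ψ (algebraMap B (AdicCompletion (RingHom.ker ((Ideal.Quotient.mk J).comp φ)) B) b)
          = φ b := by
  classical
  letI : Algebra B A := φ.toAlgebra
  haveI hfl : Module.Flat B A := hflat
  have hφ : algebraMap B A = φ := rfl
  set I : Ideal B := RingHom.ker ((Ideal.Quotient.mk J).comp φ) with hIdef
  have hI : I = J.comap φ := by
    ext b
    simp [hIdef, RingHom.mem_ker, Ideal.Quotient.eq_zero_iff_mem]
  have hsurj' : ∀ n : ℕ, ∀ a : A, ∃ b : B, φ b - a ∈ J ^ n := by
    intro n a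
    cases n with
    | zero => exact ⟨0, by simp⟩
    | succ n => exact hsurj n a
  -- Step 2 : map φ I = J
  have hJI : Ideal.map φ I = J := by
    apply le_antisymm
    · rw [hI]; exact Ideal.map_comap_le
    · intro a ha
      apply aux_mem_of_forall_sup J (Ideal.map φ I)
      intro n
      obtain ⟨b, hb⟩ := hsurj n a
      have hbI : b ∈ I := by
        rw [hI, Ideal.mem_comap]
        have h4 : φ b = a + (φ b - a) := by ring
        rw [h4]
        exact Ideal.add_mem J ha (Ideal.pow_le_self (Nat.succ_ne_zero n) hb)
      have h5 : a = φ b + -(φ b - a) := by ring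
      rw [h5]
      exact Ideal.add_mem _
        (Ideal.mem_sup_left (Ideal.mem_map_of_mem φ hbI))
        (Ideal.mem_sup_right (neg_mem (Ideal.pow_le_pow_right (Nat.le_succ n) hb)))
  -- Step 3 : comap φ (J ^ n) = I ^ n
  have hcom : ∀ n : ℕ, Ideal.comap φ (J ^ n) = I ^ n := by
    intro n
    cases n with
    | zero => simp
    | succ n =>
      have hmapP : Ideal.map φ (I ^ (n + 1)) = J ^ (n + 1) := by
        rw [Ideal.map_pow, hJI]
      have hPQ : I ^ (n + 1) ≤ Ideal.comap φ (J ^ (n + 1)) := by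
        rw [← hmapP]; exact Ideal.le_comap_map
      have hstep : Ideal.comap φ (J ^ (n + 1)) ≤
          I ^ (n + 1) ⊔ (J.comap φ) * Ideal.comap φ (J ^ (n + 1)) := by
        intro q hqQ
        have hq2 : algebraMap B A q ∈ Ideal.map (algebraMap B A) (I ^ (n + 1)) := by
          rw [hφ, hmapP]; exact hqQ
        have h3 := aux_flat_step J
          (fun a => by obtain ⟨b, hb⟩ := hsurj 0 a; exact ⟨b, by rw [hφ]; simpa using hb⟩)
          (I ^ (n + 1)) q hq2
        have h4 : I ^ (n + 1) ⊔ Ideal.span {q} ≤ Ideal.comap φ (J ^ (n + 1)) :=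
          sup_le hPQ ((Ideal.span_le).mpr (by simpa using hqQ))
        rw [hφ] at h3
        exact (sup_le_sup_left (Ideal.mul_mono_right h4) (I ^ (n + 1))) h3
      have hind := aux_ind _ _ _ hstep n
      have hfin : (J.comap φ) ^ (n + 1) * Ideal.comap φ (J ^ (n + 1)) ≤ I ^ (n + 1) := by
        rw [← hI]
        exact Ideal.mul_le_left.trans le_rfl
      exact le_antisymm (hind.trans (sup_le le_rfl hfin)) hPQ
  have hsmulB : ∀ n : ℕ, (I ^ n • ⊤ : Ideal B) = I ^ n := fun n => by
    rw [smul_eq_mul, Ideal.mul_top]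
  have hsmulA : ∀ n : ℕ, (J ^ n • ⊤ : Ideal A) = J ^ n := fun n => by
    rw [smul_eq_mul, Ideal.mul_top]
  have hle : ∀ n : ℕ, (I ^ n • ⊤ : Ideal B) ≤ Ideal.comap φ (J ^ n) := fun n => by
    rw [hsmulB n, hcom n]
  -- quotient ring isomorphisms
  set τ : ∀ n : ℕ, (B ⧸ (I ^ n • ⊤ : Ideal B)) →+* A ⧸ J ^ n :=
    fun n => Ideal.quotientMap (J ^ n) φ (hle n) with hτ
  have hτmk : ∀ (n : ℕ) (b : B),
      τ n (Ideal.Quotient.mk _ b) = Ideal.Quotient.mk (J ^ n) (φ b) :=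
    fun n b => Ideal.quotientMap_mk
  have hτbij : ∀ n, Function.Bijective (τ n) := by
    intro n
    constructor
    · apply Ideal.quotientMap_injective'
      rw [hcom n, hsmulB n]
    · intro y
      obtain ⟨a, rfl⟩ := Ideal.Quotient.mk_surjective y
      obtain ⟨b, hb⟩ := hsurj' n a
      exact ⟨Ideal.Quotient.mk _ b, by
        rw [hτmk]; rwa [Ideal.Quotient.mk_eq_mk_iff_sub_mem]⟩
  set σ : ∀ n : ℕ, A ⧸ J ^ n ≃+* B ⧸ (I ^ n • ⊤ : Ideal B) :=
    fun n => (RingEquiv.ofBijective (τ n) (hτbij n)).symm with hσ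
  have hσ_eq : ∀ (n : ℕ) (x : B ⧸ (I ^ n • ⊤ : Ideal B)) (y : A ⧸ J ^ n),
      τ n x = y → σ n y = x := by
    intro n x y hxy
    rw [hσ, ← hxy]
    have h7 : τ n x = (RingEquiv.ofBijective (τ n) (hτbij n)) x := rfl
    rw [h7, RingEquiv.symm_apply_apply]
  have hστ : ∀ (n : ℕ) (x : B ⧸ (I ^ n • ⊤ : Ideal B)), σ n (τ n x) = x :=
    fun n x => hσ_eq n x _ rfl
  -- compatibility with transition maps
  have hcompat : ∀ (a : A) {m n : ℕ} (hmn : m ≤ n),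
      AdicCompletion.transitionMap I B hmn (σ n (Ideal.Quotient.mk (J ^ n) a)) =
        σ m (Ideal.Quotient.mk (J ^ m) a) := by
    intro a m n hmn
    obtain ⟨b, hb⟩ := Ideal.Quotient.mk_surjective (σ n (Ideal.Quotient.mk (J ^ n) a))
    have h6 : τ n (Ideal.Quotient.mk _ b) = Ideal.Quotient.mk (J ^ n) a := by
      rw [hb, hσ]
      have h7 := (RingEquiv.ofBijective (τ n) (hτbij n)).apply_symm_apply
        (Ideal.Quotient.mk (J ^ n) a)
      rwa [RingEquiv.coe_ofBijective] at h7
    rw [hτmk, Ideal.Quotient.mk_eq_mk_iff_sub_mem] at h6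
    rw [← hb, AdicCompletion.transitionMap_ideal_mk]
    refine (hσ_eq m _ _ ?_).symm
    rw [hτmk, Ideal.Quotient.mk_eq_mk_iff_sub_mem]
    exact Ideal.pow_le_pow_right hmn h6
  -- the ring homomorphism χ : A → AdicCompletion I B
  set χ : A →+* AdicCompletion I B :=
    { toFun := fun a => ⟨fun n => σ n (Ideal.Quotient.mk (J ^ n) a),
        fun {m n} hmn => hcompat a hmn⟩
      map_one' := AdicCompletion.ext (fun n => by
        show σ n (Ideal.Quotient.mk (J ^ n) 1) = (1 : AdicCompletion I B).val n
        rw [map_one, map_one, AdicCompletion.val_one])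
      map_mul' := fun x y => AdicCompletion.ext (fun n => by
        show σ n (Ideal.Quotient.mk (J ^ n) (x * y)) = _
        rw [map_mul, map_mul]; rfl)
      map_zero' := AdicCompletion.ext (fun n => by
        show σ n (Ideal.Quotient.mk (J ^ n) 0) = (0 : AdicCompletion I B).val n
        rw [map_zero, map_zero, AdicCompletion.val_zero]; rfl)
      map_add' := fun x y => AdicCompletion.ext (fun n => by
        show σ n (Ideal.Quotient.mk (J ^ n) (x + y)) = _
        rw [map_add, map_add]; rfl) } with hχ
  have hχval : ∀ (a : A) (n : ℕ), (χ a).val n = σ n (Ideal.Quotient.mk (J ^ n) a) :=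
    fun a n => rfl
  -- injectivity
  have hinj : Function.Injective χ := by
    intro a a' haa
    rw [← sub_eq_zero]
    have hsub : ∀ n : ℕ, a - a' ∈ J ^ n := by
      intro n
      have h5 : (χ a).val n = (χ a').val n := by rw [haa]
      rw [hχval, hχval] at h5
      have h6 := (σ n).injective h5
      rwa [Ideal.Quotient.mk_eq_mk_iff_sub_mem] at h6
    apply IsHausdorff.haus (IsAdicComplete.toIsHausdorff (I := J) (M := A)) (a - a')
    intro n
    rw [SModEq.zero, hsmulA n]
    exact hsub n
  -- surjectivity
  have hsurjχ : Function.Surjective χ := by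
    intro x
    have hbex : ∀ n : ℕ, ∃ b : B, Ideal.Quotient.mk (I ^ n • ⊤ : Ideal B) b = x.val n :=
      fun n => Ideal.Quotient.mk_surjective _
    choose b hb using hbex
    have hcauchy : ∀ {m n : ℕ}, m ≤ n →
        φ (b m) ≡ φ (b n) [SMOD (J ^ m • ⊤ : Submodule A A)] := by
      intro m n hmn
      rw [SModEq.sub_mem]
      have h8 := x.2 hmn
      rw [← hb n, AdicCompletion.transitionMap_ideal_mk] at h8
      rw [← hb m] at h8
      rw [Ideal.Quotient.mk_eq_mk_iff_sub_mem] at h8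
      rw [hsmulB m] at h8
      have h9 : φ (b n - b m) ∈ J ^ m := by
        have h10 := Ideal.mem_map_of_mem φ h8
        rw [Ideal.map_pow, hJI] at h10
        exact h10
      have h11 : (J ^ m • ⊤ : Submodule A A) = (J ^ m : Ideal A) := hsmulA m
      rw [h11]
      rw [map_sub] at h9
      have h12 : φ (b m) - φ (b n) = -(φ (b n) - φ (b m)) := by ring
      rw [h12]
      exact neg_mem h9
    obtain ⟨L, hL⟩ := IsPrecomplete.prec (IsAdicComplete.toIsPrecomplete (I := J) (M := A))
      (f := fun n => φ (b n)) (fun {m n} h => hcauchy h)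
    refine ⟨L, ?_⟩
    apply AdicCompletion.ext
    intro n
    rw [hχval, ← hb n]
    apply hσ_eq
    rw [hτmk, Ideal.Quotient.mk_eq_mk_iff_sub_mem]
    have h13 := hL n
    rw [SModEq.sub_mem, hsmulA n] at h13
    exact h13
  -- conclusion
  refine ⟨(RingEquiv.ofBijective χ ⟨hinj, hsurjχ⟩).symm, ?_⟩
  intro b
  have h16 : algebraMap B (AdicCompletion I B) b =
      (RingEquiv.ofBijective χ ⟨hinj, hsurjχ⟩) (φ b) := by
    have h14 : (RingEquiv.ofBijective χ ⟨hinj, hsurjχ⟩) (φ b) = χ (φ b) := rfl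
    rw [h14]
    apply AdicCompletion.ext
    intro n
    rw [hχval]
    have h15 : (algebraMap B (AdicCompletion I B) b).val n =
        Ideal.Quotient.mk (I ^ n • ⊤ : Ideal B) b := rfl
    rw [h15]
    exact (hσ_eq n _ _ (hτmk n b)).symm
  rw [h16, RingEquiv.symm_apply_apply]
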